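/- Let T and f be self-maps of a complete metric space (X,d) with T(X) ⊆ f(X), suppose the pair (T,f) is compatible, and suppose there is r ∈ [0,1) such that for all x, y ∈ X, d(Tx,Ty) ≤ r·max{ d(fx,fy), d(Tx,fx), d(Ty,fy), (1/2)[d(Tx,fy) + d(Ty,fx)] }. If either T or f is continuous, then for each x_0 ∈ X any sequence {x_n} with y_n = Tx_n = f x_{n+1} for n = 0,1,2,... yields a Cauchy sequence {y_n} in X converging to some z ∈ X, and z is the unique common fixed point of T and f. -/
import Mathlib

open Filter Topology

/-- Two self-maps `T` and `f` of a metric space are *compatible* if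
`d(f(T xₙ), T(f xₙ)) → 0` whenever `f xₙ → t` and `T xₙ → t` for some `t`. -/
def CompatiblePair {X : Type*} [MetricSpace X] (T f : X → X) : Prop :=
  ∀ (x : ℕ → X) (t : X),
    Filter.Tendsto (fun n => f (x n)) Filter.atTop (nhds t) →
    Filter.Tendsto (fun n => T (x n)) Filter.atTop (nhds t) →
    Filter.Tendsto (fun n => dist (f (T (x n))) (T (f (x n)))) Filter.atTop (nhds 0)

private lemma quasi_limit {X : Type*} [MetricSpace X] (T f : X → X) (r : ℝ)
    (hcontr : ∀ x y,
      dist (T x) (T y) ≤ r * max (max (dist (f x) (f y)) (dist (T x) (f x)))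
        (max (dist (T y) (f y)) ((dist (T x) (f y) + dist (T y) (f x)) / 2)))
    {p q : ℕ → X} {Tp fp Tq fq : X}
    (hTp : Tendsto (fun n => T (p n)) atTop (𝓝 Tp))
    (hfp : Tendsto (fun n => f (p n)) atTop (𝓝 fp))
    (hTq : Tendsto (fun n => T (q n)) atTop (𝓝 Tq))
    (hfq : Tendsto (fun n => f (q n)) atTop (𝓝 fq)) :
    dist Tp Tq ≤ r * max (max (dist fp fq) (dist Tp fp))
        (max (dist Tq fq) ((dist Tp fq + dist Tq fp) / 2)) :=
  le_of_tendsto_of_tendsto' (hTp.dist hTq)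
    ((((hfp.dist hfq).max (hTp.dist hfp)).max ((hTq.dist hfq).max
      (((hTp.dist hfq).add (hTq.dist hfp)).div_const 2))).const_mul r)
    (fun n => hcontr (p n) (q n))

private lemma collapse {r d M : ℝ} (hr0 : 0 ≤ r) (hr1 : r < 1) (hd : 0 ≤ d)
    (h : d ≤ r * M) (hM : M ≤ d) : d = 0 := by
  nlinarith [mul_le_mul_of_nonneg_left hM hr0]

/-- Babu et al., Corollary 4.2: for a compatible pair `(T,f)` on a complete metric space
with `T(X) ⊆ f(X)`, the quasi-contraction condition, and `T` or `f` continuous, every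
sequence with `y_n = T x_n = f x_{n+1}` is Cauchy and converges to the unique common
fixed point of `T` and `f`. -/
theorem babu_corollary
    {X : Type*} [MetricSpace X] [CompleteSpace X] [Nonempty X]
    (T f : X → X)
    (hsub : Set.range T ⊆ Set.range f)
    (hcompat : CompatiblePair T f)
    (r : ℝ) (hr0 : 0 ≤ r) (hr1 : r < 1)
    (hcontr : ∀ x y,
      dist (T x) (T y) ≤ r * max (max (dist (f x) (f y)) (dist (T x) (f x)))
        (max (dist (T y) (f y)) ((dist (T x) (f y) + dist (T y) (f x)) / 2)))
    (hcont : Continuous T ∨ Continuous f) :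
    ∀ x : ℕ → X, (∀ n, T (x n) = f (x (n + 1))) →
      CauchySeq (fun n => T (x n)) ∧
      ∃ z, Filter.Tendsto (fun n => T (x n)) Filter.atTop (nhds z) ∧
        T z = z ∧ f z = z ∧ ∀ w, T w = w → f w = w → w = z := by
  intro x hx
  have hy : ∀ n, f (x (n + 1)) = T (x n) := fun n => (hx n).symm
  -- step inequality
  have hstep : ∀ n, dist (T (x (n + 1))) (T (x (n + 1 + 1)))
      ≤ r * dist (T (x n)) (T (x (n + 1))) := by
    intro n
    have h := hcontr (x (n + 1)) (x (n + 1 + 1))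
    rw [hy n, hy (n + 1)] at h
    set a := dist (T (x n)) (T (x (n + 1))) with ha
    set b := dist (T (x (n + 1))) (T (x (n + 1 + 1))) with hb
    have ha0 : 0 ≤ a := dist_nonneg
    have hb0 : 0 ≤ b := dist_nonneg
    have htri : dist (T (x (n + 1 + 1))) (T (x n))
        ≤ dist (T (x (n + 1 + 1))) (T (x (n + 1))) + dist (T (x (n + 1))) (T (x n)) :=
      dist_triangle _ _ _
    rw [dist_comm (T (x (n + 1 + 1))) (T (x (n + 1))), ← hb,
      dist_comm (T (x (n + 1))) (T (x n)), ← ha] at htri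
    rw [dist_comm (T (x (n + 1))) (T (x n)), ← ha, dist_self,
      dist_comm (T (x (n + 1 + 1))) (T (x (n + 1))), ← hb] at h
    -- h : b ≤ r * max (max a a) (max b ((0 + dist (T (x (n+1+1))) (T (x n))) / 2))
    rcases le_total b a with hba | hab
    · calc b ≤ r * max (max a a) (max b ((0 + dist (T (x (n + 1 + 1))) (T (x n))) / 2)) := h
        _ ≤ r * a := by
          apply mul_le_mul_of_nonneg_left _ hr0
          apply max_le (max_le le_rfl le_rfl)
          exact max_le hba (by linarith)
    · have hb' : b ≤ r * b := by
        calc b ≤ r * max (max a a) (max b ((0 + dist (T (x (n + 1 + 1))) (T (x n))) / 2)) := h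
          _ ≤ r * b := by
            apply mul_le_mul_of_nonneg_left _ hr0
            apply max_le (max_le hab hab)
            exact max_le le_rfl (by linarith)
      have : b = 0 := by nlinarith
      rw [this]; positivity
  -- geometric bound
  have hgeo : ∀ n, dist (T (x n)) (T (x (n + 1))) ≤ dist (T (x 0)) (T (x 1)) * r ^ n := by
    intro n
    induction n with
    | zero => simp
    | succ k ih =>
      calc dist (T (x (k + 1))) (T (x (k + 1 + 1)))
          ≤ r * dist (T (x k)) (T (x (k + 1))) := hstep k
        _ ≤ r * (dist (T (x 0)) (T (x 1)) * r ^ k) := mul_le_mul_of_nonneg_left ih hr0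
        _ = dist (T (x 0)) (T (x 1)) * r ^ (k + 1) := by ring
  have hcauchy : CauchySeq (fun n => T (x n)) := cauchySeq_of_le_geometric r _ hr1 hgeo
  obtain ⟨z, hz⟩ := cauchySeq_tendsto_of_complete hcauchy
  refine ⟨hcauchy, z, hz, ?_⟩
  set u : ℕ → X := fun n => x (n + 1) with hu
  have hfu : Tendsto (fun n => f (u n)) atTop (𝓝 z) := hz.congr (fun n => hx n)
  have hTu : Tendsto (fun n => T (u n)) atTop (𝓝 z) := by
    have := hz.comp (tendsto_add_atTop_nat 1)
    exact this
  have hdist0 := hcompat u z hfu hTu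
  -- common fixed point
  have hfix : T z = z ∧ f z = z := by
    rcases hcont with hT | hf
    · -- T continuous
      have hTfu : Tendsto (fun n => T (f (u n))) atTop (𝓝 (T z)) := (hT.tendsto z).comp hfu
      have hfTu : Tendsto (fun n => f (T (u n))) atTop (𝓝 (T z)) := by
        have h' : Tendsto (fun n => dist (T (f (u n))) (f (T (u n)))) atTop (𝓝 0) :=
          hdist0.congr (fun n => dist_comm _ _)
        exact hTfu.congr_dist h'
      have hTTu : Tendsto (fun n => T (T (u n))) atTop (𝓝 (T z)) := (hT.tendsto z).comp hTu
      have h1 := quasi_limit T f r hcontr hTTu hfTu hTu hfu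
      rw [dist_self, dist_self, dist_comm z (T z)] at h1
      have hTz : T z = z := by
        refine dist_eq_zero.mp (collapse hr0 hr1 dist_nonneg h1 ?_)
        apply max_le (max_le le_rfl dist_nonneg)
        exact max_le dist_nonneg (by linarith [dist_nonneg (x := T z) (y := z)])
      obtain ⟨u0, hu0⟩ := hsub ⟨z, hTz⟩
      have hc1 : Tendsto (fun _ : ℕ => T u0) atTop (𝓝 (T u0)) := tendsto_const_nhds
      have hc2 : Tendsto (fun _ : ℕ => f u0) atTop (𝓝 z) := by
        rw [hu0]; exact tendsto_const_nhds
      have h2 := quasi_limit T f r hcontr hc1 hc2 hTu hfu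
      rw [dist_self] at h2
      have hTu0 : T u0 = z := by
        refine dist_eq_zero.mp (collapse hr0 hr1 dist_nonneg h2 ?_)
        apply max_le (max_le dist_nonneg le_rfl)
        exact max_le dist_nonneg (by linarith [dist_nonneg (x := T u0) (y := z)])
      have h3 := hcompat (fun _ => u0) z
        (by rw [show (fun _ : ℕ => f u0) = fun _ : ℕ => z from funext fun _ => hu0]
            exact tendsto_const_nhds)
        (by rw [show (fun _ : ℕ => T u0) = fun _ : ℕ => z from funext fun _ => hTu0]
            exact tendsto_const_nhds)
      have h4 : dist (f (T u0)) (T (f u0)) = 0 := tendsto_nhds_unique tendsto_const_nhds h3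
      rw [hTu0, hu0, hTz] at h4
      exact ⟨hTz, dist_eq_zero.mp h4⟩
    · -- f continuous
      have hffu : Tendsto (fun n => f (f (u n))) atTop (𝓝 (f z)) := (hf.tendsto z).comp hfu
      have hfTu : Tendsto (fun n => f (T (u n))) atTop (𝓝 (f z)) := (hf.tendsto z).comp hTu
      have hTfu : Tendsto (fun n => T (f (u n))) atTop (𝓝 (f z)) := hfTu.congr_dist hdist0
      have h1 := quasi_limit T f r hcontr hTfu hffu hTu hfu
      rw [dist_self, dist_self, dist_comm z (f z)] at h1
      have hfz : f z = z := by
        refine dist_eq_zero.mp (collapse hr0 hr1 dist_nonneg h1 ?_)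
        apply max_le (max_le le_rfl dist_nonneg)
        exact max_le dist_nonneg (by linarith [dist_nonneg (x := f z) (y := z)])
      have hc1 : Tendsto (fun _ : ℕ => T z) atTop (𝓝 (T z)) := tendsto_const_nhds
      have hc2 : Tendsto (fun _ : ℕ => f z) atTop (𝓝 z) := by
        rw [hfz]; exact tendsto_const_nhds
      have h2 := quasi_limit T f r hcontr hc1 hc2 hTu hfu
      rw [dist_self] at h2
      have hTz : T z = z := by
        refine dist_eq_zero.mp (collapse hr0 hr1 dist_nonneg h2 ?_)
        apply max_le (max_le dist_nonneg le_rfl)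
        exact max_le dist_nonneg (by linarith [dist_nonneg (x := T z) (y := z)])
      exact ⟨hTz, hfz⟩
  obtain ⟨hTz, hfz⟩ := hfix
  refine ⟨hTz, hfz, fun w hTw hfw => ?_⟩
  have h := hcontr z w
  rw [hTz, hfz, hTw, hfw, dist_self, dist_self, dist_comm w z] at h
  have : dist z w = 0 := by
    refine collapse hr0 hr1 dist_nonneg h ?_
    apply max_le (max_le le_rfl dist_nonneg)
    exact max_le dist_nonneg (by linarith [dist_nonneg (x := z) (y := w)])
  exact (dist_eq_zero.mp this).symm
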